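/- Let U ⊂ ℝⁿ be bounded open with C¹ boundary and inward unit normal ν, let x ∈ U, and let y ∈ ∂U be a ρ-closest point to x. Then (x − y)/γ_K(x − y) belongs to the subdifferential ∂γ_{K°}(ν(y)); in particular, if γ_{K°} is differentiable at ν(y), then x = y + ρ(x)·Dγ_{K°}(ν(y)). -/

import Mathlib

open RealInnerProductSpace Set Filter Topology

lemma seg_frontier_aux {E : Type*} [TopologicalSpace E] {U s : Set E} (hU : IsOpen U)
    (hs : IsPreconnected s) (h1 : (s ∩ U).Nonempty) (h2 : (s \ U).Nonempty) :
    (s ∩ frontier U).Nonempty := by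
  by_contra h
  have hdisj : Disjoint (frontier U) s := by
    rw [Set.not_nonempty_iff_eq_empty] at h
    rw [Set.disjoint_iff_inter_eq_empty]
    rw [Set.inter_comm]; exact h
  have hclopen := isClopen_preimage_val hU hdisj
  haveI : PreconnectedSpace s := Subtype.preconnectedSpace hs
  rcases isClopen_iff.mp hclopen with he | he
  · obtain ⟨a, has, haU⟩ := h1
    exact absurd (show (⟨a, has⟩ : s) ∈ _ from haU) (he ▸ Set.notMem_empty _)
  · obtain ⟨a, has, haU⟩ := h2
    exact haU (show (⟨a, has⟩ : s) ∈ Subtype.val ⁻¹' U from he ▸ Set.mem_univ _)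

/-- The polar set of `K`. -/
def polarSet {n : ℕ} (K : Set (EuclideanSpace ℝ (Fin n))) : Set (EuclideanSpace ℝ (Fin n)) :=
  {x | ∀ y ∈ K, ⟪x, y⟫ ≤ 1}

/-- The subdifferential of a function `γ : ℝⁿ → ℝ` at `x`. -/
def subdiff {n : ℕ} (γ : EuclideanSpace ℝ (Fin n) → ℝ) (x : EuclideanSpace ℝ (Fin n)) :
    Set (EuclideanSpace ℝ (Fin n)) :=
  {v | ∀ y, γ x + ⟪y - x, v⟫ ≤ γ y}

/-- The distance to `∂U` with respect to the gauge of `K`. -/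
noncomputable def distGauge {n : ℕ} (K U : Set (EuclideanSpace ℝ (Fin n)))
    (x : EuclideanSpace ℝ (Fin n)) : ℝ :=
  sInf ((fun y => gauge K (x - y)) '' frontier U)

set_option maxHeartbeats 1000000 in
/-- Let `U` be bounded open with `C¹` boundary near `y` (locally `U = {f > 0}` and
`∂U = {f = 0}` for a `C¹` function `f` with nonvanishing gradient), with inward unit normal
`ν = ∇f(y)/‖∇f(y)‖` at `y`.  If `y ∈ ∂U` is a `ρ`-closest point to `x ∈ U`, then
`(x − y)/γ_K(x − y) ∈ ∂γ_{K°}(ν)`; in particular, if `γ_{K°}` is differentiable at `ν` with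
gradient `v`, then `x = y + ρ(x) • v`. -/
theorem closest_point_normal_direction {n : ℕ} (K U : Set (EuclideanSpace ℝ (Fin n)))
    (hKc : IsCompact K) (hKconv : Convex ℝ K) (h0 : (0 : EuclideanSpace ℝ (Fin n)) ∈ interior K)
    (hU : IsOpen U) (hUb : Bornology.IsBounded U)
    (x : EuclideanSpace ℝ (Fin n)) (hx : x ∈ U)
    (y : EuclideanSpace ℝ (Fin n)) (hy : y ∈ frontier U)
    (hclosest : gauge K (x - y) = distGauge K U x)
    (V : Set (EuclideanSpace ℝ (Fin n))) (hV : IsOpen V) (hyV : y ∈ V)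
    (f : EuclideanSpace ℝ (Fin n) → ℝ) (hf : ContDiffOn ℝ 1 f V)
    (hUV : U ∩ V = {z ∈ V | 0 < f z}) (hbV : frontier U ∩ V = {z ∈ V | f z = 0})
    (hgrad : ∀ z ∈ V, gradient f z ≠ 0)
    (ν : EuclideanSpace ℝ (Fin n)) (hν : ν = ‖gradient f y‖⁻¹ • gradient f y) :
    (gauge K (x - y))⁻¹ • (x - y) ∈ subdiff (gauge (polarSet K)) ν ∧
    (∀ v : EuclideanSpace ℝ (Fin n), HasGradientAt (gauge (polarSet K)) v ν →
      x = y + distGauge K U x • v) := by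
  classical
  set g := gradient f y with hg
  set w := (gauge K (x - y))⁻¹ • (x - y) with hw
  have hKcl : IsClosed K := hKc.isClosed
  have habs : Absorbent ℝ K := absorbent_nhds_zero (mem_interior_iff_mem_nhds.mp h0)
  have hKvb : Bornology.IsVonNBounded ℝ K :=
    (NormedSpace.isVonNBounded_iff ℝ).mpr hKc.isBounded
  have hyU : y ∉ U := by
    rw [hU.frontier_eq] at hy; exact hy.2
  have hxy : x - y ≠ 0 := sub_ne_zero.mpr (fun h => hyU (h ▸ hx))
  have hρpos : 0 < gauge K (x - y) := (gauge_pos habs hKvb).mpr hxy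
  have hρle : ∀ z ∈ frontier U, gauge K (x - y) ≤ gauge K (x - z) := by
    intro z hz
    rw [hclosest]
    exact csInf_le ⟨0, by rintro r ⟨w', _, rfl⟩; exact gauge_nonneg _⟩ ⟨z, hz, rfl⟩
  -- the gauge-ball around x is inside U
  have hBU : ∀ z, gauge K (x - z) < gauge K (x - y) → z ∈ U := by
    intro z hz
    by_contra hzU
    obtain ⟨y', hy's, hy'f⟩ := seg_frontier_aux hU (convex_segment x z).isPreconnected
      ⟨x, left_mem_segment ℝ x z, hx⟩ ⟨z, right_mem_segment ℝ x z, hzU⟩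
    obtain ⟨a, b, ha, hb, hab, rfl⟩ := hy's
    have hxab : x - (a • x + b • z) = b • (x - z) := by
      have ha1 : a = 1 - b := by linarith
      rw [ha1]; module
    have h1 : gauge K (x - (a • x + b • z)) = b * gauge K (x - z) := by
      rw [hxab, gauge_smul_of_nonneg hb, smul_eq_mul]
    have h2 := hρle _ hy'f
    have hb1 : b ≤ 1 := by linarith
    nlinarith [gauge_nonneg (s := K) (x - z)]
  have hgw : gauge K w = 1 := by
    rw [hw, gauge_smul_of_nonneg (inv_nonneg.mpr hρpos.le), smul_eq_mul,
      inv_mul_cancel₀ hρpos.ne']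
  have hfdiff : HasGradientAt f g y :=
    ((hf.differentiableOn one_ne_zero).differentiableAt (hV.mem_nhds hyV)).hasGradientAt
  have hfy : f y = 0 := by
    have : y ∈ frontier U ∩ V := ⟨hy, hyV⟩
    rw [hbV] at this; exact this.2
  -- key variational inequality for u in the interior of K
  have hkey0 : ∀ u ∈ interior K, 0 ≤ ⟪g, w - u⟫ := by
    intro u hu
    set d := gauge K (x - y) • (w - u) with hd
    have hcurve : ∀ t : ℝ, 0 < t → t ≤ 1 → y + t • d ∈ U := by
      intro t ht ht1
      apply hBU
      have hx_y : x - y = gauge K (x - y) • w := by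
        rw [hw, smul_smul, mul_inv_cancel₀ hρpos.ne', one_smul]
      have hrw : x - (y + t • d) = gauge K (x - y) • ((1 - t) • w + t • u) := by
        calc x - (y + t • d) = gauge K (x - y) • w - t • d := by rw [← hx_y]; module
          _ = gauge K (x - y) • ((1 - t) • w + t • u) := by rw [hd]; module
      rw [hrw, gauge_smul_of_nonneg hρpos.le, smul_eq_mul]
      have hgu : gauge K u < 1 := interior_subset_gauge_lt_one K hu
      have hsum : gauge K ((1 - t) • w + t • u)
          ≤ (1 - t) * gauge K w + t * gauge K u := by
        calc gauge K ((1 - t) • w + t • u)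
            ≤ gauge K ((1 - t) • w) + gauge K (t • u) := gauge_add_le hKconv habs _ _
          _ = (1 - t) * gauge K w + t * gauge K u := by
              rw [gauge_smul_of_nonneg (by linarith : (0:ℝ) ≤ 1 - t),
                gauge_smul_of_nonneg ht.le, smul_eq_mul, smul_eq_mul]
      have h4 : t * gauge K u < t * 1 := mul_lt_mul_of_pos_left hgu ht
      rw [hgw] at hsum
      have h3 : gauge K ((1 - t) • w + t • u) < 1 := by linarith
      calc gauge K (x - y) * gauge K ((1 - t) • w + t • u)
          < gauge K (x - y) * 1 := mul_lt_mul_of_pos_left h3 hρpos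
        _ = gauge K (x - y) := mul_one _
    -- the line map and its derivative
    have hlinemap : HasDerivAt (fun t : ℝ => y + t • d) d 0 := by
      simpa using ((hasDerivAt_id (0:ℝ)).smul_const d).const_add y
    have hline : HasDerivAt (fun t : ℝ => f (y + t • d)) ⟪g, d⟫ 0 := by
      have hF : HasFDerivAt f (InnerProductSpace.toDual ℝ _ g) (y + (0:ℝ) • d) := by
        simpa using hfdiff.hasFDerivAt
      have := hF.comp_hasDerivAt 0 hlinemap
      exact (show HasDerivAt (f ∘ fun t : ℝ => y + t • d) ⟪g, d⟫ 0 by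
        simpa [InnerProductSpace.toDual_apply_apply] using this)
    have hmem : ∀ᶠ t in 𝓝[>] (0:ℝ), f (y + t • d) ≥ f y := by
      have hVmem : ∀ᶠ t in 𝓝 (0:ℝ), y + t • d ∈ V := by
        have hcont : Continuous (fun t : ℝ => y + t • d) :=
          continuous_const.add (continuous_id.smul continuous_const)
        exact (hcont.tendsto' 0 y (by simp)).eventually_mem (hV.mem_nhds hyV)
      have h01 : ∀ᶠ t in 𝓝[>] (0:ℝ), 0 < t ∧ t ≤ 1 := by
        filter_upwards [self_mem_nhdsWithin,
          nhdsWithin_le_nhds (Iio_mem_nhds (by norm_num : (0:ℝ) < 1))] with t h1 h2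
        exact ⟨h1, le_of_lt h2⟩
      filter_upwards [nhdsWithin_le_nhds hVmem, h01] with t hVt ⟨ht0, ht1⟩
      have hUt : y + t • d ∈ U := hcurve t ht0 ht1
      have : y + t • d ∈ U ∩ V := ⟨hUt, hVt⟩
      rw [hUV] at this
      rw [hfy]; exact this.2.le
    -- derivative at a right-minimum is nonneg
    have hslope : Tendsto (slope (fun t : ℝ => f (y + t • d)) 0) (𝓝[>] 0) (𝓝 ⟪g, d⟫) :=
      (hasDerivAt_iff_tendsto_slope.mp hline).mono_left
        (nhdsWithin_mono 0 (fun t ht => ne_of_gt ht))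
    have hge : 0 ≤ ⟪g, d⟫ := by
      refine ge_of_tendsto hslope ?_
      filter_upwards [hmem, self_mem_nhdsWithin] with t hmt ht0
      rw [slope_def_field]
      apply div_nonneg (by simpa using sub_nonneg.mpr hmt)
      simpa using le_of_lt ht0
    rw [hd, real_inner_smul_right] at hge
    nlinarith
  -- extend to all of K by density
  have hkey : ∀ u ∈ K, 0 ≤ ⟪g, w - u⟫ := by
    intro u hu
    have hucl : u ∈ closure (interior K) := by
      have hcont : Continuous (fun s : ℝ =>
          (1 - s) • u + s • (0 : EuclideanSpace ℝ (Fin n))) :=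
        ((continuous_const.sub continuous_id).smul continuous_const).add
          (continuous_id.smul continuous_const)
      have htends : Tendsto (fun s : ℝ => (1 - s) • u + s • (0 : EuclideanSpace ℝ (Fin n)))
          (𝓝[>] 0) (𝓝 u) :=
        (hcont.tendsto' 0 u (by simp)).mono_left nhdsWithin_le_nhds
      refine mem_closure_of_tendsto htends ?_
      filter_upwards [Ioo_mem_nhdsGT_of_mem (by norm_num : (0:ℝ) ∈ Ico 0 1)] with s hs
      exact hKconv.combo_self_interior_mem_interior hu h0 (by linarith [hs.2]) hs.1 (by ring)
    have hC : IsClosed {p : EuclideanSpace ℝ (Fin n) | 0 ≤ ⟪g, w - p⟫} :=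
      isClosed_le continuous_const (continuous_const.inner (continuous_const.sub continuous_id))
    exact closure_minimal (fun p hp => hkey0 p hp) hC hucl
  have hwK : w ∈ K := by
    have := mem_closure_of_gauge_le_one hKconv (interior_subset h0) habs (le_of_eq hgw)
    rwa [hKcl.closure_eq] at this
  -- the polar set is absorbent
  obtain ⟨R, hR0, hKR⟩ : ∃ R : ℝ, 0 < R ∧ K ⊆ Metric.closedBall 0 R := by
    obtain ⟨R, hR⟩ := hKc.isBounded.subset_closedBall (0 : EuclideanSpace ℝ (Fin n))
    exact ⟨max R 1, lt_of_lt_of_le one_pos (le_max_right _ _),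
      hR.trans (Metric.closedBall_subset_closedBall (le_max_left _ _))⟩
  have hball : Metric.ball (0 : EuclideanSpace ℝ (Fin n)) R⁻¹ ⊆ polarSet K := by
    intro p hp u hu
    have hpn : ‖p‖ < R⁻¹ := by simpa using hp
    have hun : ‖u‖ ≤ R := by simpa using hKR hu
    calc ⟪p, u⟫ ≤ ‖p‖ * ‖u‖ := real_inner_le_norm p u
      _ ≤ R⁻¹ * R := mul_le_mul hpn.le hun (norm_nonneg u) (inv_nonneg.mpr hR0.le)
      _ = 1 := inv_mul_cancel₀ hR0.ne'
  have hPabs : Absorbent ℝ (polarSet K) :=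
    absorbent_nhds_zero (Filter.mem_of_superset
      (Metric.ball_mem_nhds 0 (inv_pos.mpr hR0)) hball)
  -- pairing inequality against the polar gauge
  have hinner_le : ∀ z, ⟪z, w⟫ ≤ gauge (polarSet K) z := by
    intro z
    unfold gauge
    refine le_csInf hPabs.gauge_set_nonempty ?_
    rintro r ⟨hr, hzr⟩
    obtain ⟨p, hp, rfl⟩ := hzr
    rw [real_inner_smul_left]
    calc r * ⟪p, w⟫ ≤ r * 1 := mul_le_mul_of_nonneg_left (hp w hwK) hr.le
      _ = r := mul_one r
  have hgy : g ≠ 0 := hgrad y hyV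
  have hνn : ‖ν‖ = 1 := by
    rw [hν, norm_smul, norm_inv, norm_norm, inv_mul_cancel₀ (norm_ne_zero_iff.mpr hgy)]
  have hkeyν : ∀ u ∈ K, ⟪ν, u⟫ ≤ ⟪ν, w⟫ := by
    intro u hu
    have h1 := hkey u hu
    rw [inner_sub_right] at h1
    rw [hν, real_inner_smul_left, real_inner_smul_left]
    exact mul_le_mul_of_nonneg_left (by linarith) (inv_nonneg.mpr (norm_nonneg g))
  obtain ⟨δ, hδ0, hδ⟩ : ∃ δ > 0, Metric.ball (0 : EuclideanSpace ℝ (Fin n)) δ ⊆ K := by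
    rcases Metric.mem_nhds_iff.mp (mem_interior_iff_mem_nhds.mp h0) with ⟨δ, hδ0, hδ⟩
    exact ⟨δ, hδ0, hδ⟩
  have hδν : (δ/2) • ν ∈ K := by
    apply hδ
    have : ‖(δ/2) • ν‖ = δ/2 := by
      rw [norm_smul, hνn, mul_one, Real.norm_eq_abs, abs_of_pos (by linarith)]
    simp only [Metric.mem_ball, dist_zero_right, this]
    linarith
  have hc : 0 < ⟪ν, w⟫ := by
    have h2 : ⟪ν, (δ/2 : ℝ) • ν⟫ = δ/2 := by
      rw [real_inner_smul_right, real_inner_self_eq_norm_mul_norm, hνn]; ring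
    have := hkeyν _ hδν
    rw [h2] at this
    linarith
  have hνgauge : gauge (polarSet K) ν ≤ ⟪ν, w⟫ := by
    apply gauge_le_of_mem hc.le
    refine ⟨⟪ν, w⟫⁻¹ • ν, ?_, ?_⟩
    · intro u hu
      rw [real_inner_smul_left]
      calc ⟪ν, w⟫⁻¹ * ⟪ν, u⟫ ≤ ⟪ν, w⟫⁻¹ * ⟪ν, w⟫ :=
            mul_le_mul_of_nonneg_left (hkeyν u hu) (inv_nonneg.mpr hc.le)
        _ = 1 := inv_mul_cancel₀ hc.ne'
    · show ⟪ν, w⟫ • (⟪ν, w⟫⁻¹ • ν) = ν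
      rw [smul_smul, mul_inv_cancel₀ hc.ne', one_smul]
  have hsub : w ∈ subdiff (gauge (polarSet K)) ν := by
    simp only [subdiff, Set.mem_setOf_eq]
    intro z
    have h1 := hinner_le z
    have h3 : ⟪z - ν, w⟫ = ⟪z, w⟫ - ⟪ν, w⟫ := inner_sub_left z ν w
    linarith
  refine ⟨hsub, fun v hv => ?_⟩
  -- linear part has gradient w
  have hlinF : HasFDerivAt (fun z : EuclideanSpace ℝ (Fin n) => ⟪z, w⟫)
      (InnerProductSpace.toDual ℝ (EuclideanSpace ℝ (Fin n)) w : _) ν := by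
    have heq : (fun z : EuclideanSpace ℝ (Fin n) => ⟪z, w⟫)
        = fun z => (InnerProductSpace.toDual ℝ (EuclideanSpace ℝ (Fin n)) w) z := by
      funext z; rw [InnerProductSpace.toDual_apply_apply, real_inner_comm]
    rw [heq]
    exact (InnerProductSpace.toDual ℝ (EuclideanSpace ℝ (Fin n)) w :
      EuclideanSpace ℝ (Fin n) →L[ℝ] ℝ).hasFDerivAt
  have hdiffF : HasFDerivAt (fun z => gauge (polarSet K) z - ⟪z, w⟫)
      ((InnerProductSpace.toDual ℝ (EuclideanSpace ℝ (Fin n)) v : _)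
        - (InnerProductSpace.toDual ℝ (EuclideanSpace ℝ (Fin n)) w : _)) ν :=
    hv.hasFDerivAt.sub hlinF
  have hsub' : ∀ z, gauge (polarSet K) ν + ⟪z - ν, w⟫ ≤ gauge (polarSet K) z := hsub
  have hmin : IsLocalMin (fun z => gauge (polarSet K) z - ⟪z, w⟫) ν := by
    refine Filter.Eventually.of_forall fun z => ?_
    show gauge (polarSet K) ν - ⟪ν, w⟫ ≤ gauge (polarSet K) z - ⟪z, w⟫
    have h3 : ⟪z - ν, w⟫ = ⟪z, w⟫ - ⟪ν, w⟫ := inner_sub_left z ν w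
    linarith [hsub' z]
  have hzero := hmin.hasFDerivAt_eq_zero hdiffF
  have hvw : v = w := by
    have h4 : InnerProductSpace.toDual ℝ (EuclideanSpace ℝ (Fin n)) (v - w) = 0 := by
      rw [map_sub]
      exact_mod_cast hzero
    have h5 : v - w = 0 := by
      have := (InnerProductSpace.toDual ℝ (EuclideanSpace ℝ (Fin n))).injective
        (h4.trans (map_zero _).symm)
      simpa using this
    exact sub_eq_zero.mp h5
  rw [hvw, hw, ← hclosest, smul_inv_smul₀ hρpos.ne']
  module
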